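/- Let $r > k \ge 2$ and define real numbers $\alpha_k, \alpha_{k-1}, \dots, \alpha_0$ by $\alpha_k = 1/\binom{r}{k}$ and, recursively for $i < k$, by the relation $\sum_{j=i}^{k} \binom{k-i}{j-i}\binom{r-k+i}{j}\,\alpha_j = 0$. Then for every $0 \le i \le k$, $|\alpha_i| \le \frac{2^{k-i}(k-i)!}{\binom{r-k+i}{i}}$. -/

import Mathlib

open Finset

theorem stmt_8 (k r : ℕ) (hk : 2 ≤ k) (hkr : k < r) (α : ℕ → ℝ)
    (hαk : α k = 1 / (r.choose k : ℝ))
    (hrec : ∀ i < k, ∑ j ∈ Finset.Icc i k,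
      ((k - i).choose (j - i) : ℝ) * ((r - k + i).choose j : ℝ) * α j = 0) :
    ∀ i ≤ k, |α i| ≤ 2^(k-i) * ((k-i).factorial : ℝ) / ((r - k + i).choose i : ℝ) := by
  have hbase : |α k| ≤ 2^(k-k) * ((k-k).factorial : ℝ) / ((r - k + k).choose k : ℝ) := by
    have hrk : r - k + k = r := by omega
    have hpos : (0:ℝ) < (r.choose k : ℝ) := by
      exact_mod_cast Nat.choose_pos (le_of_lt hkr)
    rw [hαk, hrk, abs_of_pos (by positivity)]
    simp
  have key : ∀ d i, i ≤ k → k - i ≤ d →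
      |α i| ≤ 2^(k-i) * ((k-i).factorial : ℝ) / ((r - k + i).choose i : ℝ) := by
    intro d
    induction d with
    | zero =>
      intro i hik h0
      have : i = k := by omega
      subst this; exact hbase
    | succ d ih =>
      intro i hik hle
      rcases eq_or_lt_of_le hik with rfl | hlt
      · exact hbase
      · have hC0 : (0:ℝ) < ((r - k + i).choose i : ℝ) := by
          exact_mod_cast Nat.choose_pos (by omega)
        have hsplit : Finset.Icc i k = insert i (Finset.Icc (i+1) k) := by
          ext x; simp [Finset.mem_Icc]; omega
        have hnot : i ∉ Finset.Icc (i+1) k := by simp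
        have h0 := hrec i hlt
        rw [hsplit, Finset.sum_insert hnot] at h0
        simp only [Nat.sub_self, Nat.choose_zero_right, Nat.cast_one, one_mul] at h0
        set S := ∑ j ∈ Finset.Icc (i+1) k,
          ((k - i).choose (j - i) : ℝ) * ((r - k + i).choose j : ℝ) * α j with hS
        have hαi : α i = -S / ((r - k + i).choose i : ℝ) := by
          field_simp
          linarith
        -- termwise bound
        have hterm : ∀ j ∈ Finset.Icc (i+1) k,
            |((k - i).choose (j - i) : ℝ) * ((r - k + i).choose j : ℝ) * α j|
              ≤ ((k-i).factorial : ℝ) * 2^(k-j) := by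
          intro j hj
          simp only [Finset.mem_Icc] at hj
          have hjk : j ≤ k := hj.2
          have hij : i + 1 ≤ j := hj.1
          have hCj : (0:ℝ) < ((r - k + j).choose j : ℝ) := by
            exact_mod_cast Nat.choose_pos (by omega)
          have hαj := ih j hjk (by omega)
          have hcle : ((r - k + i).choose j : ℝ) ≤ ((r - k + j).choose j : ℝ) := by
            exact_mod_cast Nat.choose_le_choose j (by omega)
          have hfact : ((k-i).choose (j-i) * (k-j).factorial : ℕ) ≤ (k-i).factorial := by
            have h1 : (k-i).choose (j-i) * (j-i).factorial * (k-j).factorial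
                = (k-i).factorial := by
              have := Nat.choose_mul_factorial_mul_factorial
                (show j - i ≤ k - i by omega)
              have hkj : k - i - (j - i) = k - j := by omega
              rwa [hkj] at this
            calc (k-i).choose (j-i) * (k-j).factorial
                ≤ (k-i).choose (j-i) * (j-i).factorial * (k-j).factorial := by
                  have := Nat.one_le_iff_ne_zero.mpr (Nat.factorial_ne_zero (j-i))
                  nlinarith [Nat.factorial_pos (k-j), Nat.choose_pos (show j-i ≤ k-i by omega)]
              _ = (k-i).factorial := h1
          rw [abs_mul, abs_mul, abs_of_nonneg (by positivity : (0:ℝ) ≤ ((k - i).choose (j - i) : ℝ)),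
            abs_of_nonneg (by positivity : (0:ℝ) ≤ ((r - k + i).choose j : ℝ))]
          calc ((k - i).choose (j - i) : ℝ) * ((r - k + i).choose j : ℝ) * |α j|
              ≤ ((k - i).choose (j - i) : ℝ) * ((r - k + j).choose j : ℝ) *
                (2^(k-j) * ((k-j).factorial : ℝ) / ((r - k + j).choose j : ℝ)) := by
                gcongr
            _ = ((k - i).choose (j - i) : ℝ) * ((k-j).factorial : ℝ) * 2^(k-j) := by
                field_simp
            _ ≤ ((k-i).factorial : ℝ) * 2^(k-j) := by
                gcongr ?_ * _
                exact_mod_cast hfact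
        have hgeom : ∑ j ∈ Finset.Icc (i+1) k, (2:ℝ)^(k-j) ≤ 2^(k-i) := by
          have hre : ∑ j ∈ Finset.Icc (i+1) k, (2:ℝ)^(k-j)
              = ∑ s ∈ Finset.range (k-i), (2:ℝ)^s := by
            apply Finset.sum_nbij' (fun j => k - j) (fun s => k - s)
            · intro a ha; simp only [Finset.mem_Icc] at ha; simp; omega
            · intro a ha; simp only [Finset.mem_range] at ha; simp only [Finset.mem_Icc]; omega
            · intro a ha; simp only [Finset.mem_Icc] at ha; omega
            · intro a ha; simp only [Finset.mem_range] at ha; omega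
            · intro a ha; rfl
          rw [hre, _root_.geom_sum_eq (by norm_num)]
          norm_num
        have hSb : |S| ≤ ((k-i).factorial : ℝ) * 2^(k-i) := by
          calc |S| ≤ ∑ j ∈ Finset.Icc (i+1) k,
              |((k - i).choose (j - i) : ℝ) * ((r - k + i).choose j : ℝ) * α j| :=
            Finset.abs_sum_le_sum_abs _ _
          _ ≤ ∑ j ∈ Finset.Icc (i+1) k, ((k-i).factorial : ℝ) * 2^(k-j) :=
            Finset.sum_le_sum hterm
          _ = ((k-i).factorial : ℝ) * ∑ j ∈ Finset.Icc (i+1) k, (2:ℝ)^(k-j) := by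
            rw [Finset.mul_sum]
          _ ≤ ((k-i).factorial : ℝ) * 2^(k-i) := by
            gcongr
        rw [hαi, abs_div, abs_neg, abs_of_pos hC0, div_le_div_iff₀ hC0 hC0]
        have : |S| * ((r - k + i).choose i : ℝ)
            ≤ ((k-i).factorial : ℝ) * 2^(k-i) * ((r - k + i).choose i : ℝ) := by
          gcongr
        nlinarith [hSb, hC0, abs_nonneg S]
  intro i hik
  exact key (k - i) i hik le_rfl
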